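/- arXiv:1508.01348 — 4 statements merged into one kernel-verified Lean document; each statement's English description precedes it below -/
import Mathlib

section
/- For every integer n ≥ 3, the exponent of the Weyl group W(Bₙ) = (Fin n → ZMod 2) ⋊ Sₙ equals twice the exponent of the symmetric group Sₙ. -/
open Multiplicative

abbrev Vn (n : ℕ) := Multiplicative (Fin n → ZMod 2)

def permAut (n : ℕ) : Equiv.Perm (Fin n) →* MulAut (Vn n) where
  toFun σ :=
    { toFun := fun v => ofAdd fun i => toAdd v (σ⁻¹ i)
      invFun := fun v => ofAdd fun i => toAdd v (σ i)
      left_inv := fun v => by simp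
      right_inv := fun v => by simp
      map_mul' := fun v w => rfl }
  map_one' := rfl
  map_mul' := fun σ τ => rfl

@[simp] lemma permAut_apply (n : ℕ) (σ : Equiv.Perm (Fin n)) (v : Vn n) (i : Fin n) :
    toAdd (permAut n σ v) i = toAdd v (σ⁻¹ i) := rfl

def Ve (n : ℕ) : Subgroup (Vn n) where
  carrier := {v | ∑ i, toAdd v i = 0}
  one_mem' := by simp
  mul_mem' := by
    intro a b ha hb
    simp only [Set.mem_setOf_eq, toAdd_mul, Pi.add_apply, Finset.sum_add_distrib] at *
    rw [ha, hb, add_zero]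
  inv_mem' := by
    intro a ha
    simp only [Set.mem_setOf_eq, toAdd_inv, Pi.neg_apply, Finset.sum_neg_distrib] at *
    rw [ha, neg_zero]

lemma permAut_mem_Ve {n : ℕ} (σ : Equiv.Perm (Fin n)) {v : Vn n} (hv : v ∈ Ve n) :
    permAut n σ v ∈ Ve n := by
  have h : ∑ i, toAdd v (σ⁻¹ i) = ∑ i, toAdd v i := Equiv.sum_comp σ⁻¹ (toAdd v)
  show ∑ i, toAdd (permAut n σ v) i = 0
  rw [show ∑ i, toAdd (permAut n σ v) i = ∑ i, toAdd v (σ⁻¹ i) from rfl, h]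
  exact hv

def permAutVe (n : ℕ) : Equiv.Perm (Fin n) →* MulAut (Ve n) where
  toFun σ :=
    { toFun := fun v => ⟨permAut n σ (v : Vn n), permAut_mem_Ve σ v.2⟩
      invFun := fun v => ⟨permAut n σ⁻¹ (v : Vn n), permAut_mem_Ve σ⁻¹ v.2⟩
      left_inv := fun v => Subtype.ext <| Multiplicative.toAdd.injective <| funext fun i => by simp
      right_inv := fun v => Subtype.ext <| Multiplicative.toAdd.injective <| funext fun i => by simp
      map_mul' := fun v w => Subtype.ext (map_mul (permAut n σ) (v : Vn n) (w : Vn n)) }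
  map_one' := rfl
  map_mul' := fun σ τ => rfl

/-- The Weyl group of `Bₙ` (equivalently `Cₙ`). -/
abbrev WB (n : ℕ) := Vn n ⋊[permAut n] Equiv.Perm (Fin n)

/-- The Weyl group of `Dₙ`. -/
abbrev WD (n : ℕ) := Ve n ⋊[permAutVe n] Equiv.Perm (Fin n)

lemma Vn.mul_self {n : ℕ} (v : Vn n) : v * v = 1 := by
  apply Multiplicative.toAdd.injective
  funext i
  show toAdd v i + toAdd v i = 0
  exact CharTwo.add_self_eq_zero _
lemma WB.sq_eq_one {n : ℕ} (g : WB n) (h : g.right = 1) : g * g = 1 := by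
  have hg : g = SemidirectProduct.inl g.left := by
    conv_lhs => rw [← SemidirectProduct.inl_left_mul_inr_right g]
    rw [h, map_one, mul_one]
  rw [hg, ← map_mul, Vn.mul_self, map_one]
lemma WB.right_pow {n : ℕ} (g : WB n) (k : ℕ) : (g ^ k).right = g.right ^ k :=
  map_pow (SemidirectProduct.rightHom) g k
lemma WB.pow_left_apply {n : ℕ} (v : Vn n) (σ : Equiv.Perm (Fin n)) (k : ℕ) (i : Fin n) :
    toAdd (((⟨v, σ⟩ : WB n) ^ k).left) i
      = ∑ j ∈ Finset.range k, toAdd v ((σ ^ j)⁻¹ i) := by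
  induction k with
  | zero => simp
  | succ k ih =>
    rw [pow_succ, SemidirectProduct.mul_left, Finset.sum_range_succ, ← ih]
    have hr : ((⟨v, σ⟩ : WB n) ^ k).right = σ ^ k := WB.right_pow _ k
    rw [hr]
    rfl

/-- For every integer `n ≥ 3`, the exponent of the Weyl group
`W(Bₙ) = (Fin n → ZMod 2) ⋊ Sₙ` equals twice the exponent of the symmetric group `Sₙ`. -/
theorem exponent_weylB (n : ℕ) (hn : 3 ≤ n) :
    Monoid.exponent (WB n) = 2 * Monoid.exponent (Equiv.Perm (Fin n)) := by
  set m := Monoid.exponent (Equiv.Perm (Fin n)) with hm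
  set E := Monoid.exponent (WB n) with hE
  have hm0 : m ≠ 0 := Monoid.exponent_ne_zero_of_finite
  -- E ∣ 2 * m
  have hE2m : E ∣ 2 * m := by
    apply Monoid.exponent_dvd_of_forall_pow_eq_one
    intro g
    have h1 : (g ^ m).right = 1 := by
      rw [WB.right_pow, Monoid.pow_exponent_eq_one]
    calc g ^ (2 * m) = (g ^ m) * (g ^ m) := by rw [← pow_add]; ring_nf
    _ = 1 := WB.sq_eq_one _ h1
  -- m ∣ E
  have hmE : m ∣ E := by
    apply Monoid.exponent_dvd_of_forall_pow_eq_one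
    intro σ
    apply SemidirectProduct.inr_injective (φ := permAut n)
    rw [map_pow, map_one, Monoid.pow_exponent_eq_one]
  -- 2 ∣ m
  have h2m : 2 ∣ m := by
    have hx : (⟨0, by omega⟩ : Fin n) ≠ ⟨1, by omega⟩ := by simp [Fin.ext_iff]
    have hswap : orderOf (Equiv.swap (⟨0, by omega⟩ : Fin n) ⟨1, by omega⟩) = 2 := by
      refine orderOf_eq_prime ?_ ?_
      · rw [pow_two, Equiv.swap_mul_self]
      · intro h
        apply hx
        have : Equiv.swap (⟨0, by omega⟩ : Fin n) ⟨1, by omega⟩ ⟨0, by omega⟩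
            = (⟨0, by omega⟩ : Fin n) := by rw [h]; rfl
        rw [Equiv.swap_apply_left] at this
        exact this.symm
    exact hswap ▸ Monoid.order_dvd_exponent _
  set a := m.factorization 2 with ha
  have ha1 : 1 ≤ a := (Nat.Prime.factorization_pos_of_dvd Nat.prime_two hm0 h2m)
  -- element σ of order 2^a
  obtain ⟨σ, hσ⟩ := Nat.prime_two.exists_orderOf_eq_pow_factorization_exponent
    (Equiv.Perm (Fin n))
  rw [← hm, ← ha] at hσ
  -- a point of minimal period exactly 2^a
  have hne : σ ^ (2 ^ (a - 1)) ≠ 1 := by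
    intro h
    have := orderOf_dvd_of_pow_eq_one h
    rw [hσ] at this
    have := Nat.le_of_dvd (by positivity) this
    exact absurd this (by
      have : 2 ^ (a - 1) < 2 ^ a := Nat.pow_lt_pow_right (by norm_num) (by omega)
      omega)
  obtain ⟨i, hi⟩ : ∃ i, (σ ^ (2 ^ (a - 1))) i ≠ i := by
    by_contra h
    push_neg at h
    exact hne (Equiv.ext h)
  set s := Function.minimalPeriod σ i with hs
  have hsdvd : s ∣ 2 ^ a := by
    apply (Function.isPeriodicPt_iff_minimalPeriod_dvd).mp
    show σ^[2 ^ a] i = i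
    rw [← Equiv.Perm.coe_pow, ← hσ, pow_orderOf_eq_one]
    rfl
  have hsnot : ¬ s ∣ 2 ^ (a - 1) := by
    intro h
    apply hi
    exact (Function.isPeriodicPt_iff_minimalPeriod_dvd (f := ⇑σ) (x := i)
      (n := 2 ^ (a - 1))).mpr h
  have hseq : s = 2 ^ a := by
    obtain ⟨b, hb, hbe⟩ := (Nat.dvd_prime_pow Nat.prime_two).mp hsdvd
    have hba : b = a := by
      by_contra hba
      exact hsnot (hbe ▸ pow_dvd_pow 2 (by omega : b ≤ a - 1))
    rw [hbe, hba]
  -- the element g of order 2^(a+1)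
  set v : Vn n := ofAdd (Pi.single i (1 : ZMod 2)) with hv
  set g : WB n := ⟨v, σ⟩ with hg
  have hgpow : g ^ (2 ^ a) ≠ 1 := by
    intro h
    have h0 : toAdd ((g ^ (2 ^ a)).left) i = 0 := by
      have := congrArg (fun x : WB n => toAdd x.left i) h
      simpa using this
    rw [WB.pow_left_apply] at h0
    have hsum : ∀ j ∈ Finset.range (2 ^ a),
        toAdd v ((σ ^ j)⁻¹ i) = if j = 0 then 1 else 0 := by
      intro j hj
      rw [Finset.mem_range] at hj
      have hcond : (σ ^ j)⁻¹ i = i ↔ j = 0 := by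
        constructor
        · intro hji
          have : σ^[j] i = i := by
            have := congrArg (σ ^ j) hji
            rw [show (σ ^ j) ((σ ^ j)⁻¹ i) = i from Equiv.apply_symm_apply _ _] at this
            rw [← Equiv.Perm.coe_pow]; exact this.symm
          have hdvd := Function.IsPeriodicPt.minimalPeriod_dvd this
          rw [← hs, hseq] at hdvd
          exact Nat.eq_zero_of_dvd_of_lt hdvd hj
        · rintro rfl; simp
      simp only [hv, toAdd_ofAdd]
      rw [Pi.single_apply]
      simp only [hcond]
    rw [Finset.sum_congr rfl hsum, Finset.sum_ite_eq' (Finset.range (2 ^ a)) 0 (fun _ => (1 : ZMod 2))] at h0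
    simp at h0
  have hgone : g ^ (2 ^ (a + 1)) = 1 := by
    have : (2 : ℕ) ^ (a + 1) = 2 ^ a + 2 ^ a := by ring
    rw [this, pow_add]
    apply WB.sq_eq_one
    rw [WB.right_pow]
    show σ ^ (2 ^ a) = 1
    rw [← hσ, pow_orderOf_eq_one]
  have hordg : orderOf g = 2 ^ (a + 1) := by
    have hdvd := orderOf_dvd_of_pow_eq_one hgone
    obtain ⟨b, hb, hbe⟩ := (Nat.dvd_prime_pow Nat.prime_two).mp hdvd
    rw [hbe]
    congr 1
    by_contra hba
    have hba' : b ≤ a := by omega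
    exact hgpow (orderOf_dvd_iff_pow_eq_one.mp (hbe ▸ pow_dvd_pow 2 hba'))
  have h2a1 : 2 ^ (a + 1) ∣ E := hordg ▸ Monoid.order_dvd_exponent g
  -- combine
  have hmdecomp : 2 ^ a * (m / 2 ^ a) = m := Nat.ordProj_mul_ordCompl_eq_self m 2
  have htodd : ¬ 2 ∣ (m / 2 ^ a) := Nat.not_dvd_ordCompl Nat.prime_two hm0
  have hcop : Nat.Coprime (2 ^ (a + 1)) (m / 2 ^ a) :=
    Nat.Coprime.pow_left _ ((Nat.Prime.coprime_iff_not_dvd Nat.prime_two).mpr htodd)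
  have ht : (m / 2 ^ a) ∣ E := dvd_trans (Dvd.intro_left _ hmdecomp) hmE
  have h2mE : 2 * m ∣ E := by
    have h2m' : 2 * m = 2 ^ (a + 1) * (m / 2 ^ a) := by
      conv_lhs => rw [← hmdecomp]
      ring
    rw [h2m']
    exact Nat.Coprime.mul_dvd_of_dvd_of_dvd hcop h2a1 ht
  exact Nat.dvd_antisymm hE2m h2mE
end

section
/- Let n ≥ 3 and let H be a subgroup of Sₙ containing the alternating group Aₙ. If W is an H-invariant additive subgroup of V = (Fin n → ZMod 2) (for the coordinate-permutation action) with W ≠ 0 and W ≠ V, then W equals Δ (the subgroup of constant vectors) or W equals Vₑ (the subgroup of vectors with coordinate sum zero). -/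
/-- The subgroup `Δ` of constant vectors in `V = (Fin n → ZMod 2)`. -/
def DeltaAdd (n : ℕ) : AddSubgroup (Fin n → ZMod 2) where
  carrier := {v | ∀ i j, v i = v j}
  zero_mem' := fun _ _ => rfl
  add_mem' := fun {a b} ha hb i j => by
    simp only [Pi.add_apply]; rw [ha i j, hb i j]
  neg_mem' := fun {a} ha i j => by
    simp only [Pi.neg_apply]; rw [ha i j]

/-- The even subgroup `Vₑ` of vectors with coordinate sum zero in `V = (Fin n → ZMod 2)`. -/
def VeAdd (n : ℕ) : AddSubgroup (Fin n → ZMod 2) where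
  carrier := {v | ∑ i, v i = 0}
  zero_mem' := by simp
  add_mem' := by
    intro a b ha hb
    simp only [Set.mem_setOf_eq, Pi.add_apply, Finset.sum_add_distrib] at *
    rw [ha, hb, add_zero]
  neg_mem' := by
    intro a ha
    simp only [Set.mem_setOf_eq, Pi.neg_apply, Finset.sum_neg_distrib] at *
    rw [ha, neg_zero]

lemma single_comp_inv {n : ℕ} (σ : Equiv.Perm (Fin n)) (a : Fin n) :
    (fun i => (Pi.single a 1 : Fin n → ZMod 2) (σ⁻¹ i)) = Pi.single (σ a) 1 := by
  funext i
  simp only [Pi.single_apply]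
  congr 1
  rw [eq_iff_iff]
  constructor
  · intro h; rw [← h, Equiv.Perm.inv_def, Equiv.apply_symm_apply]
  · intro h; rw [h, Equiv.Perm.inv_def, Equiv.symm_apply_apply]

lemma pair_comp_inv {n : ℕ} (σ : Equiv.Perm (Fin n)) (a b : Fin n) :
    (fun i => (Pi.single a 1 + Pi.single b 1 : Fin n → ZMod 2) (σ⁻¹ i)) =
      Pi.single (σ a) 1 + Pi.single (σ b) 1 := by
  funext i
  simp only [Pi.add_apply]
  rw [congrFun (single_comp_inv σ a) i, congrFun (single_comp_inv σ b) i]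

/-- Let `n ≥ 3` and let `H` be a subgroup of `Sₙ` containing the alternating group `Aₙ`.
If `W` is an `H`-invariant additive subgroup of `V = (Fin n → ZMod 2)` (for the
coordinate-permutation action) with `W ≠ 0` and `W ≠ V`, then `W = Δ` (the subgroup of
constant vectors) or `W = Vₑ` (the subgroup of vectors with coordinate sum zero). -/
theorem invariant_subgroups_of_V (n : ℕ) (hn : 3 ≤ n)
    (H : Subgroup (Equiv.Perm (Fin n))) (hH : alternatingGroup (Fin n) ≤ H)
    (W : AddSubgroup (Fin n → ZMod 2))
    (hinv : ∀ σ ∈ H, ∀ v ∈ W, (fun i => v (σ⁻¹ i)) ∈ W)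
    (hW0 : W ≠ ⊥) (hWV : W ≠ ⊤) :
    W = DeltaAdd n ∨ W = VeAdd n := by
  have h01 : ∀ x : ZMod 2, x = 0 ∨ x = 1 := by decide
  have hne1 : ∀ x y : ZMod 2, x ≠ y → x + y = 1 := by decide
  have hself : ∀ x : ZMod 2, x + x = 0 := by decide
  have hne2 : ∀ x y z : ZMod 2, x ≠ y → z ≠ x → z = y := by decide
  have h0n : 0 < n := by omega
  set z : Fin n := ⟨0, h0n⟩ with hzdef
  by_cases hconst : ∀ v ∈ W, ∀ i j, v i = v j
  · -- W ⊆ Δ, and W ≠ ⊥ forces W = Δ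
    left
    obtain ⟨v, hvW, hv0⟩ : ∃ v ∈ W, v ≠ 0 := by
      by_contra h
      push_neg at h
      exact hW0 (by
        ext x
        simp only [AddSubgroup.mem_bot]
        exact ⟨fun hx => h x hx, fun hx => hx ▸ W.zero_mem⟩)
    have hv1 : v = fun _ => 1 := by
      obtain ⟨i, hi⟩ : ∃ i, v i ≠ 0 := by
        by_contra h; push_neg at h; exact hv0 (funext h)
      have hvi : v i = 1 := (h01 (v i)).resolve_left hi
      funext j
      rw [hconst v hvW j i, hvi]
    apply le_antisymm
    · intro w hw
      exact hconst w hw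
    · intro w hw
      have hw' : ∀ i j, w i = w j := hw
      rcases h01 (w z) with h | h
      · have : w = 0 := by funext j; rw [hw' j z, h]; rfl
        rw [this]; exact W.zero_mem
      · have : w = v := by funext j; rw [hw' j z, h, hv1]
        rw [this]; exact hvW
  · -- W contains a non-constant vector.
    right
    push_neg at hconst
    obtain ⟨v, hvW, i, j, hij⟩ := hconst
    have hijne : i ≠ j := fun h => hij (h ▸ rfl)
    obtain ⟨k, hk⟩ : (Finset.univ \ {i, j} : Finset (Fin n)).Nonempty := by
      rw [← Finset.card_pos, Finset.card_sdiff_of_subset (Finset.subset_univ _)]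
      have h2 : ({i, j} : Finset (Fin n)).card ≤ 2 :=
        (Finset.card_insert_le _ _).trans (by simp)
      have h3 : (Finset.univ : Finset (Fin n)).card = n := by simp
      omega
    simp only [Finset.mem_sdiff, Finset.mem_insert, Finset.mem_singleton, not_or] at hk
    obtain ⟨-, hki, hkj⟩ := hk
    set σ : Equiv.Perm (Fin n) := Equiv.swap i j * Equiv.swap j k with hσ
    have hσA : σ ∈ alternatingGroup (Fin n) := by
      rw [Equiv.Perm.mem_alternatingGroup, map_mul, Equiv.Perm.sign_swap hijne,
        Equiv.Perm.sign_swap (fun h => hkj h.symm)]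
      norm_num
    have hwW : (fun x => v (σ⁻¹ x)) ∈ W := hinv σ (hH hσA) v hvW
    have huW : (v + fun x => v (σ⁻¹ x)) ∈ W := W.add_mem hvW hwW
    have hσinv : σ⁻¹ = Equiv.swap j k * Equiv.swap i j := by
      rw [hσ, mul_inv_rev, Equiv.swap_inv, Equiv.swap_inv]
    have e1 : σ⁻¹ i = k := by
      rw [hσinv]; simp only [Equiv.Perm.mul_apply]
      rw [Equiv.swap_apply_left, Equiv.swap_apply_left]
    have e2 : σ⁻¹ j = i := by
      rw [hσinv]; simp only [Equiv.Perm.mul_apply]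
      rw [Equiv.swap_apply_right, Equiv.swap_apply_of_ne_of_ne hijne (fun h => hki h.symm)]
    have e3 : σ⁻¹ k = j := by
      rw [hσinv]; simp only [Equiv.Perm.mul_apply]
      rw [Equiv.swap_apply_of_ne_of_ne hki hkj, Equiv.swap_apply_right]
    have e4 : ∀ x, x ≠ i → x ≠ j → x ≠ k → σ⁻¹ x = x := by
      intro x hxi hxj hxk
      rw [hσinv]; simp only [Equiv.Perm.mul_apply]
      rw [Equiv.swap_apply_of_ne_of_ne hxi hxj, Equiv.swap_apply_of_ne_of_ne hxj hxk]
    obtain ⟨a, b, hab, habW⟩ :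
        ∃ a b : Fin n, a ≠ b ∧ (Pi.single a 1 + Pi.single b 1 : Fin n → ZMod 2) ∈ W := by
      by_cases hvk : v k = v i
      · refine ⟨j, k, fun h => hkj h.symm, ?_⟩
        have heq : (v + fun x => v (σ⁻¹ x)) = Pi.single j 1 + Pi.single k 1 := by
          funext x
          simp only [Pi.add_apply, Pi.single_apply]
          by_cases hx1 : x = i
          · subst hx1
            rw [e1, hvk, hself, if_neg hijne, if_neg (fun h => hki h.symm), add_zero]
          · by_cases hx2 : x = j
            · subst hx2
              rw [e2, hne1 _ _ (fun h => hij h.symm), if_pos rfl,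
                if_neg (fun h => hkj h.symm), add_zero]
            · by_cases hx3 : x = k
              · subst hx3
                rw [e3, hvk, hne1 _ _ hij, if_neg hkj, if_pos rfl, zero_add]
              · rw [e4 x hx1 hx2 hx3, hself, if_neg hx2, if_neg hx3, add_zero]
        rw [← heq]; exact huW
      · have hvkj : v k = v j := hne2 (v i) (v j) (v k) hij hvk
        refine ⟨i, j, hijne, ?_⟩
        have heq : (v + fun x => v (σ⁻¹ x)) = Pi.single i 1 + Pi.single j 1 := by
          funext x
          simp only [Pi.add_apply, Pi.single_apply]
          by_cases hx1 : x = i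
          · subst hx1
            rw [e1, hvkj, hne1 _ _ hij, if_pos rfl, if_neg hijne, add_zero]
          · by_cases hx2 : x = j
            · subst hx2
              rw [e2, hne1 _ _ (fun h => hij h.symm), if_neg (fun h => hijne h.symm),
                if_pos rfl, zero_add]
            · by_cases hx3 : x = k
              · subst hx3
                rw [e3, hvkj, hself, if_neg hki, if_neg hkj, add_zero]
              · rw [e4 x hx1 hx2 hx3, hself, if_neg hx1, if_neg hx2, add_zero]
        rw [← heq]; exact huW
    -- transitivity on pairs: all e_c + e_d are in W
    have hp : ∀ c d : Fin n, c ≠ d → (Pi.single c 1 + Pi.single d 1 : Fin n → ZMod 2) ∈ W := by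
      intro c d hcd
      set τ₁ : Equiv.Perm (Fin n) := Equiv.swap a c with hτ₁
      set τ₂ : Equiv.Perm (Fin n) := Equiv.swap (τ₁ b) d with hτ₂
      set π : Equiv.Perm (Fin n) := τ₂ * τ₁ with hπ
      have hcb : c ≠ τ₁ b := by
        intro h
        have : τ₁ c = τ₁ (τ₁ b) := by rw [h]
        rw [Equiv.swap_apply_right, Equiv.swap_apply_self] at this
        exact hab this
      have hπa : π a = c := by
        simp only [hπ, Equiv.Perm.mul_apply, hτ₁, Equiv.swap_apply_left]
        exact Equiv.swap_apply_of_ne_of_ne hcb hcd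
      have hπb : π b = d := by
        simp only [hπ, Equiv.Perm.mul_apply]
        exact Equiv.swap_apply_left _ _
      obtain ⟨σ', hσ'A, hcase⟩ :
          ∃ σ' ∈ alternatingGroup (Fin n), (σ' a = c ∧ σ' b = d) ∨ (σ' a = d ∧ σ' b = c) := by
        rcases Int.units_eq_one_or (Equiv.Perm.sign π) with hs | hs
        · exact ⟨π, Equiv.Perm.mem_alternatingGroup.mpr hs, Or.inl ⟨hπa, hπb⟩⟩
        · refine ⟨Equiv.swap c d * π, ?_, Or.inr ⟨?_, ?_⟩⟩
          · rw [Equiv.Perm.mem_alternatingGroup, map_mul, hs, Equiv.Perm.sign_swap hcd]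
            norm_num
          · simp only [Equiv.Perm.mul_apply, hπa]; exact Equiv.swap_apply_left _ _
          · simp only [Equiv.Perm.mul_apply, hπb]; exact Equiv.swap_apply_right _ _
      have hmem := hinv σ' (hH hσ'A) _ habW
      rw [pair_comp_inv] at hmem
      rcases hcase with ⟨h1, h2⟩ | ⟨h1, h2⟩
      · rwa [h1, h2] at hmem
      · rw [h1, h2] at hmem; rwa [add_comm] at hmem
    -- Vₑ ⊆ W
    have hVeW : ∀ u : Fin n → ZMod 2, ∑ x, u x = 0 → u ∈ W := by
      intro u hu
      have key : u = ∑ x : Fin n, u x • (Pi.single x 1 + Pi.single z 1 : Fin n → ZMod 2) := by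
        funext y
        rw [Finset.sum_apply]
        simp only [Pi.smul_apply, Pi.add_apply, Pi.single_apply, smul_eq_mul, mul_add,
          mul_ite, mul_one, mul_zero]
        rw [Finset.sum_add_distrib, Finset.sum_ite_eq]
        by_cases hyz : y = z
        · simp [hyz, hu]
        · simp [hyz]
      rw [key]
      apply AddSubgroup.sum_mem
      intro x _
      rcases h01 (u x) with h | h
      · rw [h, zero_smul]; exact W.zero_mem
      · rw [h, one_smul]
        by_cases hxz : x = z
        · have h0 : (Pi.single z 1 + Pi.single z 1 : Fin n → ZMod 2) = 0 := by
            funext y; simp only [Pi.add_apply, Pi.zero_apply]; exact hself _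
          rw [hxz, h0]; exact W.zero_mem
        · exact hp x z hxz
    have hsingle : ∑ x, Pi.single z (1 : ZMod 2) x = 1 := by
      simp [Pi.single_apply, Finset.sum_ite_eq']
    -- W ≤ Vₑ
    refine le_antisymm (fun w hw => ?_) (fun u hu => hVeW u hu)
    show ∑ x, w x = 0
    by_contra hsum
    have hsum1 : ∑ x, w x = 1 := (h01 _).resolve_left hsum
    have hzW : (Pi.single z 1 : Fin n → ZMod 2) ∈ W := by
      have h1 : (w + Pi.single z 1) ∈ W := by
        apply hVeW
        simp only [Pi.add_apply]
        rw [Finset.sum_add_distrib, hsum1, hsingle]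
        exact hself 1
      have h2 : (Pi.single z 1 : Fin n → ZMod 2) = w + (w + Pi.single z 1) := by
        funext y
        simp only [Pi.add_apply]
        rw [← add_assoc, hself, zero_add]
      rw [h2]; exact W.add_mem hw h1
    exact absurd (eq_top_iff.mpr (fun u _ => by
      rcases h01 (∑ x, u x) with h | h
      · exact hVeW u h
      · have h1 : (u + Pi.single z 1) ∈ W := by
          apply hVeW
          simp only [Pi.add_apply]
          rw [Finset.sum_add_distrib, h, hsingle]
          exact hself 1
        have h2 : u = (u + Pi.single z 1) + Pi.single z 1 := by
          funext y
          simp only [Pi.add_apply]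
          rw [add_assoc, hself, add_zero]
        rw [h2]; exact W.add_mem h1 hzW)) hWV
end

section
/- Let n = 3 or n ≥ 5. A subgroup N of the Weyl group W(Dₙ) = Vₑ ⋊ Sₙ is a nontrivial proper normal subgroup if and only if N equals Vₑ (identified with the subgroup of pairs (v,1)), or N equals Vₑ ⋊ Aₙ, or n is even and N equals Δ (the order-2 subgroup of constant vectors, which lies in Vₑ exactly when n is even). -/
open Multiplicative

/-- The subgroup `Δ` of constant vectors in `V`. -/
def Delta (n : ℕ) : Subgroup (Vn n) where
  carrier := {v | ∀ i j, toAdd v i = toAdd v j}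
  one_mem' := fun _ _ => rfl
  mul_mem' := fun {a b} ha hb i j => by
    simp only [toAdd_mul, Pi.add_apply]; rw [ha i j, hb i j]
  inv_mem' := fun {a} ha i j => by
    simp only [toAdd_inv, Pi.neg_apply]; rw [ha i j]

/-- `Vₑ` viewed as the subgroup of pairs `(v, 1)` inside `W(Dₙ)`. -/
def VeInWD (n : ℕ) : Subgroup (WD n) :=
  (SemidirectProduct.inl : ↥(Ve n) →* WD n).range

/-- The subgroup `Vₑ ⋊ Aₙ` of `W(Dₙ)`, consisting of the pairs `(v, σ)` with `σ ∈ Aₙ`. -/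
def VeAltInWD (n : ℕ) : Subgroup (WD n) :=
  Subgroup.comap (SemidirectProduct.rightHom : WD n →* Equiv.Perm (Fin n))
    (alternatingGroup (Fin n))

/-- `Δ` viewed as a subgroup of `W(Dₙ)` (pairs `(v, 1)` with `v` a constant vector;
note constant vectors lie in `Vₑ` exactly when `n` is even). -/
def DeltaInWD (n : ℕ) : Subgroup (WD n) :=
  Subgroup.map (SemidirectProduct.inl : ↥(Ve n) →* WD n)
    ((Delta n).comap (Ve n).subtype)
section Aux

open SemidirectProduct Equiv Subgroup

variable {n : ℕ}

lemma zmod2_add_self : ∀ x : ZMod 2, x + x = 0 := by decide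
lemma zmod2_neg : ∀ x : ZMod 2, -x = x := by decide
lemma zmod2_ne : ∀ x y : ZMod 2, x ≠ y → x + y = 1 := by decide
lemma zmod2_ne_zero : ∀ x : ZMod 2, x ≠ 0 → x = 1 := by decide

lemma mem_Ve_iff {v : Vn n} : v ∈ Ve n ↔ ∑ i, toAdd v i = 0 := Iff.rfl

lemma Ve_ext {v w : Ve n} (h : ∀ i, toAdd (v : Vn n) i = toAdd (w : Vn n) i) : v = w :=
  Subtype.ext (Multiplicative.toAdd.injective (funext h))

lemma toAdd_coe_mul (v w : Ve n) (i : Fin n) :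
    toAdd ((v * w : Ve n) : Vn n) i = toAdd (v : Vn n) i + toAdd (w : Vn n) i := rfl

lemma toAdd_coe_inv (v : Ve n) (i : Fin n) :
    toAdd ((v⁻¹ : Ve n) : Vn n) i = -toAdd (v : Vn n) i := rfl

lemma toAdd_coe_one (i : Fin n) : toAdd ((1 : Ve n) : Vn n) i = 0 := rfl

/-- the vector `e_a + e_b` -/
def pairVec (n : ℕ) (a b : Fin n) : Fin n → ZMod 2 := Pi.single a 1 + Pi.single b 1

lemma pairVec_apply (a b m : Fin n) :
    pairVec n a b m = (if m = a then 1 else 0) + (if m = b then 1 else 0) := by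
  simp [pairVec, Pi.single_apply]

lemma pairVec_sum (a b : Fin n) : ∑ i, pairVec n a b i = 0 := by
  simp only [pairVec, Pi.add_apply, Finset.sum_add_distrib, Finset.sum_pi_single']
  simp
  decide

/-- `e_a + e_b` as an element of `Ve n` -/
def pairVe (n : ℕ) (a b : Fin n) : Ve n := ⟨ofAdd (pairVec n a b), by
  rw [mem_Ve_iff]; simpa using pairVec_sum a b⟩

@[simp] lemma toAdd_pairVe (a b m : Fin n) :
    toAdd ((pairVe n a b : Ve n) : Vn n) m = pairVec n a b m := rfl

lemma pairVe_self (a : Fin n) : pairVe n a a = 1 := by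
  apply Ve_ext; intro m
  rw [toAdd_pairVe, toAdd_coe_one, pairVec_apply]
  split <;> decide

lemma pairVe_comm (a b : Fin n) : pairVe n a b = pairVe n b a := by
  apply Ve_ext; intro m
  rw [toAdd_pairVe, toAdd_pairVe, pairVec_apply, pairVec_apply, add_comm]

lemma pairVe_inv (a b : Fin n) : (pairVe n a b)⁻¹ = pairVe n a b := by
  apply Ve_ext; intro m
  rw [toAdd_coe_inv, toAdd_pairVe, zmod2_neg]

lemma pairVe_mul_pairVe (a b c : Fin n) :
    pairVe n a b * pairVe n b c = pairVe n a c := by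
  apply Ve_ext; intro m
  rw [toAdd_coe_mul, toAdd_pairVe, toAdd_pairVe, toAdd_pairVe,
    pairVec_apply, pairVec_apply, pairVec_apply]
  generalize (if m = a then (1 : ZMod 2) else 0) = x
  generalize (if m = b then (1 : ZMod 2) else 0) = y
  generalize (if m = c then (1 : ZMod 2) else 0) = z
  revert x y z; decide

lemma toAdd_permAutVe (σ : Equiv.Perm (Fin n)) (v : Ve n) (i : Fin n) :
    toAdd ((permAutVe n σ v : Ve n) : Vn n) i = toAdd (v : Vn n) (σ⁻¹ i) := rfl

lemma permAutVe_pairVe (σ : Equiv.Perm (Fin n)) (a b : Fin n) :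
    permAutVe n σ (pairVe n a b) = pairVe n (σ a) (σ b) := by
  apply Ve_ext; intro m
  rw [toAdd_permAutVe]
  simp only [toAdd_pairVe, pairVec_apply]
  congr 2 <;> · simp only [eq_iff_iff]; rw [Equiv.Perm.inv_eq_iff_eq]

end Aux
section Aux2

open SemidirectProduct Equiv Subgroup

variable {n : ℕ}

lemma VeInWD_eq_ker : VeInWD n = (rightHom : WD n →* Equiv.Perm (Fin n)).ker :=
  SemidirectProduct.range_inl_eq_ker_rightHom

lemma mem_VeInWD_iff {g : WD n} : g ∈ VeInWD n ↔ g.right = 1 := by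
  rw [VeInWD_eq_ker, MonoidHom.mem_ker, rightHom_eq_right]

lemma conj_inl_eq (g : WD n) (d : Ve n) :
    g * inl d * g⁻¹ = inl (permAutVe n g.right d) := by
  apply SemidirectProduct.ext
  · show (g * inl d * g⁻¹).left = (inl (permAutVe n g.right d)).left
    rw [mul_left, mul_left, left_inl, inv_left, mul_right, right_inl, mul_one, left_inl,
      MonoidHom.map_inv (permAutVe n) g.right, MulAut.apply_inv_self, mul_comm g.left, mul_assoc]
    simp
  · show (g * inl d * g⁻¹).right = (inl (permAutVe n g.right d)).right
    simp

lemma comm_inl_eq (g : WD n) (w : Ve n) :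
    inl w * g * (inl w)⁻¹ * g⁻¹ = inl (w * (permAutVe n g.right w)⁻¹) := by
  have h : inl w * (g * (inl w)⁻¹ * g⁻¹) = inl w * (g * (inl w)⁻¹ * g⁻¹) := rfl
  have h2 : g * (inl w)⁻¹ * g⁻¹ = inl (permAutVe n g.right w⁻¹) := by
    rw [← map_inv, conj_inl_eq]
  rw [mul_assoc, mul_assoc, ← mul_assoc g, h2, ← map_mul, map_inv]

lemma comm_mem {N : Subgroup (WD n)} (hN : N.Normal) {g : WD n} (hg : g ∈ N) (w : Ve n) :
    inl (w * (permAutVe n g.right w)⁻¹) ∈ N := by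
  rw [← comm_inl_eq]
  exact mul_mem (hN.conj_mem g hg (inl w)) (inv_mem hg)

lemma comm_pair_mem {N : Subgroup (WD n)} (hN : N.Normal) {g : WD n} (hg : g ∈ N) (a b : Fin n) :
    inl (pairVe n a b * pairVe n (g.right a) (g.right b)) ∈ N := by
  have := comm_mem hN hg (pairVe n a b)
  rwa [permAutVe_pairVe, pairVe_inv] at this

end Aux2
section Aux3

open SemidirectProduct Equiv Subgroup

variable {n : ℕ}

lemma inl_mem_of_pairs {N : Subgroup (WD n)}
    (hpairs : ∀ a b : Fin n, inl (pairVe n a b) ∈ N) (v : Ve n) : inl v ∈ N := by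
  suffices H : ∀ m : ℕ, ∀ v : Ve n,
      (Finset.univ.filter fun i => toAdd (v : Vn n) i ≠ 0).card = m → inl v ∈ N from
    H _ v rfl
  intro m
  induction m using Nat.strong_induction_on with
  | _ m ih =>
    intro v hv
    rcases Finset.eq_empty_or_nonempty
        (Finset.univ.filter fun i => toAdd (v : Vn n) i ≠ 0) with he | ⟨a, ha⟩
    · have : v = 1 := by
        apply Ve_ext; intro i
        rw [toAdd_coe_one]
        by_contra hi
        exact (Finset.eq_empty_iff_forall_notMem.1 he i)
          (Finset.mem_filter.2 ⟨Finset.mem_univ i, hi⟩)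
      rw [this, map_one]; exact one_mem N
    · rw [Finset.mem_filter] at ha
      obtain ⟨b, hb, hba⟩ : ∃ b ∈ Finset.univ.filter fun i => toAdd (v : Vn n) i ≠ 0, b ≠ a := by
        by_contra hc
        push_neg at hc
        have hsub : (Finset.univ.filter fun i => toAdd (v : Vn n) i ≠ 0) = {a} := by
          apply Finset.eq_singleton_iff_unique_mem.2
          exact ⟨Finset.mem_filter.2 ⟨Finset.mem_univ a, ha.2⟩, hc⟩
        have hsum : ∑ i, toAdd (v : Vn n) i = 0 := v.2
        rw [← Finset.sum_filter_ne_zero Finset.univ, hsub, Finset.sum_singleton] at hsum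
        exact ha.2 hsum
      rw [Finset.mem_filter] at hb
      -- v' = v * pair a b has smaller support
      set v' := v * pairVe n a b with hv'
      have hcoord : ∀ i, toAdd (v' : Vn n) i
          = toAdd (v : Vn n) i + pairVec n a b i := fun i => toAdd_coe_mul _ _ _
      have hsubset : (Finset.univ.filter fun i => toAdd (v' : Vn n) i ≠ 0)
          ⊆ (Finset.univ.filter fun i => toAdd (v : Vn n) i ≠ 0).erase a := by
        intro i hi
        rw [Finset.mem_filter] at hi
        rw [Finset.mem_erase, Finset.mem_filter]
        have hia : i ≠ a := by
          rintro rfl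
          apply hi.2
          rw [hcoord, pairVec_apply, if_pos rfl, if_neg (Ne.symm hba),
            zmod2_ne_zero _ ha.2, add_zero]
          exact zmod2_add_self 1
        refine ⟨hia, Finset.mem_univ i, ?_⟩
        intro hzero
        apply hi.2
        by_cases hib : i = b
        · subst hib
          exact absurd hzero hb.2
        · rw [hcoord, pairVec_apply, if_neg hia, if_neg hib, hzero]; simp
      have hlt : (Finset.univ.filter fun i => toAdd (v' : Vn n) i ≠ 0).card < m := by
        calc _ ≤ ((Finset.univ.filter fun i => toAdd (v : Vn n) i ≠ 0).erase a).card :=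
              Finset.card_le_card hsubset
        _ < (Finset.univ.filter fun i => toAdd (v : Vn n) i ≠ 0).card :=
              Finset.card_erase_lt_of_mem (Finset.mem_filter.2 ⟨Finset.mem_univ a, ha.2⟩)
        _ = m := hv
      have h1 : inl v' ∈ N := ih _ hlt v' rfl
      have h2 : v = v' * (pairVe n a b)⁻¹ := by rw [hv', mul_inv_cancel_right]
      rw [h2, map_mul, map_inv]
      exact mul_mem h1 (inv_mem (hpairs a b))

end Aux3
section Aux4

open SemidirectProduct Equiv Subgroup

variable {n : ℕ}

lemma inl_permAutVe_mem {N : Subgroup (WD n)} (hN : N.Normal) {v : Ve n}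
    (hv : inl v ∈ N) (σ : Equiv.Perm (Fin n)) : inl (permAutVe n σ v) ∈ N := by
  rw [show ((permAutVe n σ v : Ve n)) = (permAutVe n : Equiv.Perm (Fin n) →* MulAut (Ve n)) σ v
    from rfl, inl_aut, map_inv]
  exact hN.conj_mem _ hv _

lemma pair_mem_of_nonconst {N : Subgroup (WD n)} (hN : N.Normal) {v : Ve n}
    (hv : inl v ∈ N) {p q : Fin n}
    (hpq : toAdd (v : Vn n) p ≠ toAdd (v : Vn n) q) : inl (pairVe n p q) ∈ N := by
  have hne : p ≠ q := fun h => hpq (by rw [h])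
  have h1 : inl (v * permAutVe n (swap p q) v) ∈ N :=
    mul_mem hv (inl_permAutVe_mem hN hv (swap p q))
  have h2 : v * permAutVe n (swap p q) v = pairVe n p q := by
    apply Ve_ext; intro m
    rw [toAdd_coe_mul, toAdd_permAutVe, toAdd_pairVe, pairVec_apply, swap_inv]
    by_cases hmp : m = p
    · subst hmp
      rw [swap_apply_left, if_pos rfl, if_neg hne, add_zero]
      exact zmod2_ne _ _ hpq
    · by_cases hmq : m = q
      · subst hmq
        rw [swap_apply_right, if_neg hmp, if_pos rfl, zero_add, add_comm]
        exact zmod2_ne _ _ hpq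
      · rw [swap_apply_of_ne_of_ne hmp hmq, if_neg hmp, if_neg hmq, add_zero]
        exact zmod2_add_self _
  rwa [h2] at h1

lemma all_pairs_mem {N : Subgroup (WD n)} (hN : N.Normal) {p q : Fin n} (hpq : p ≠ q)
    (hpair : inl (pairVe n p q) ∈ N) (a b : Fin n) : inl (pairVe n a b) ∈ N := by
  by_cases hab : a = b
  · rw [hab, pairVe_self, map_one]; exact one_mem N
  · set π : Equiv.Perm (Fin n) := swap (swap p a q) b * swap p a with hπ
    have hπp : π p = a := by
      rw [hπ]
      have h1 : swap p a q ≠ a := by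
        intro h
        rcases eq_or_ne q a with h' | h'
        · rw [h'] at h
          rw [swap_apply_right] at h
          exact hpq (h.trans h'.symm)
        · rw [swap_apply_of_ne_of_ne (Ne.symm hpq) h'] at h
          exact h' h
      simp only [Equiv.Perm.mul_apply, swap_apply_left]
      exact swap_apply_of_ne_of_ne (Ne.symm h1) hab
    have hπq : π q = b := by
      rw [hπ]
      simp only [Equiv.Perm.mul_apply]
      exact swap_apply_left _ _
    have := inl_permAutVe_mem hN hpair π
    rwa [permAutVe_pairVe, hπp, hπq] at this
  
lemma VeInWD_le_of_nonconst {N : Subgroup (WD n)} (hN : N.Normal) {v : Ve n}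
    (hv : inl v ∈ N) {p q : Fin n}
    (hpq : toAdd (v : Vn n) p ≠ toAdd (v : Vn n) q) : VeInWD n ≤ N := by
  have hpairs := all_pairs_mem hN (fun h => hpq (by rw [h]))
    (pair_mem_of_nonconst hN hv hpq)
  rintro x ⟨w, rfl⟩
  exact inl_mem_of_pairs hpairs w

end Aux4
section Sn
open Equiv Equiv.Perm Subgroup

lemma alt_le_of_threeCycle {α : Type*} [Fintype α] [DecidableEq α]
    (P : Subgroup (Perm α)) (hP : P.Normal) {t : Perm α} (ht : t.IsThreeCycle)
    (htP : t ∈ P) : alternatingGroup α ≤ P := by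
  rw [← closure_three_cycles_eq_alternating]
  refine (closure_le _).2 ?_
  rintro g (hg : g.IsThreeCycle)
  obtain ⟨c, rfl⟩ := isConj_iff.1 (isConj_iff_cycleType_eq.2 (ht.trans hg.symm))
  exact hP.conj_mem _ htP _

lemma comm_swap_mem {α : Type*} [DecidableEq α] (P : Subgroup (Perm α)) (hP : P.Normal)
    {σ : Perm α} (hσ : σ ∈ P) (a b : α) :
    swap (σ a) (σ b) * swap a b ∈ P := by
  have h1 : swap a b * σ⁻¹ * (swap a b)⁻¹ ∈ P := hP.conj_mem _ (inv_mem hσ) _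
  have h2 := P.mul_mem hσ h1
  have he : swap (σ a) (σ b) * swap a b = σ * (swap a b * σ⁻¹ * (swap a b)⁻¹) := by
    rw [swap_apply_apply, swap_inv]
    group
  rwa [he]

lemma exists_notMem_of_card_lt {n : ℕ} (s : Finset (Fin n)) (h : s.card < n) :
    ∃ m : Fin n, m ∉ s := by
  by_contra hc
  push_neg at hc
  have := Finset.card_le_card (fun x _ => hc x : Finset.univ ⊆ s)
  simp at this
  omega

lemma normal_perm_ge_alternating {n : ℕ} (hn : n = 3 ∨ 5 ≤ n)
    (P : Subgroup (Perm (Fin n))) (hP : P.Normal) (hne : P ≠ ⊥) :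
    alternatingGroup (Fin n) ≤ P := by
  have h3 : 3 ≤ n := by omega
  obtain ⟨σ, hσP, hσ1⟩ : ∃ σ ∈ P, σ ≠ 1 := by
    by_contra hc
    push_neg at hc
    exact hne (eq_bot_iff_forall P |>.2 hc)
  obtain ⟨i, hi⟩ : ∃ i, σ i ≠ i := by
    by_contra hc
    push_neg at hc
    exact hσ1 (Equiv.ext hc)
  set j := σ i with hj
  have hij : i ≠ j := fun h => hi h.symm
  -- find a three cycle in P
  suffices h : ∃ t : Perm (Fin n), t.IsThreeCycle ∧ t ∈ P by
    obtain ⟨t, ht, htP⟩ := h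
    exact alt_le_of_threeCycle P hP ht htP
  by_cases hji : σ j = i
  · -- pick k ∉ {i, j}
    obtain ⟨k, hk⟩ := exists_notMem_of_card_lt {i, j} (by
      refine lt_of_le_of_lt (Finset.card_insert_le _ _) ?_
      simp; omega)
    simp only [Finset.mem_insert, Finset.mem_singleton, not_or] at hk
    obtain ⟨hki, hkj⟩ := hk
    have hc := comm_swap_mem P hP hσP j k
    rw [hji] at hc
    have hσkj : σ k ≠ j := fun h => hki (σ.injective (h.trans hj))
    have hσki : σ k ≠ i := fun h => hkj (σ.injective (h.trans hji.symm))
    by_cases hσk : σ k = k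
    · rw [hσk] at hc
      refine ⟨_, ?_, hc⟩
      rw [swap_comm i k, swap_comm j k]
      exact isThreeCycle_swap_mul_swap_same hki hkj hij
    · -- (2,2) case; i, σ k, j, k distinct, need a 5th point
      have h4 : ({i, σ k, j, k} : Finset (Fin n)).card = 4 := by
        rw [Finset.card_insert_of_notMem (by simp [hij, Ne.symm hσki, Ne.symm hki]),
          Finset.card_insert_of_notMem (by simp [hσkj, hσk]),
          Finset.card_insert_of_notMem (by simp [Ne.symm hkj]), Finset.card_singleton]
      have h5 : 5 ≤ n := by
        rcases hn with rfl | h5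
        · exfalso
          have := Finset.card_le_card (Finset.subset_univ ({i, σ k, j, k} : Finset (Fin 3)))
          rw [h4] at this; simp at this
        · exact h5
      obtain ⟨m, hm⟩ := exists_notMem_of_card_lt {i, σ k, j, k} (by omega)
      simp only [Finset.mem_insert, Finset.mem_singleton, not_or] at hm
      obtain ⟨hmi, hmσk, hmj, hmk⟩ := hm
      set c := swap i (σ k) * swap j k with hcdef
      have hc' := comm_swap_mem P hP hc (σ k) m
      have hcb : c (σ k) = i := by
        rw [hcdef]
        simp [swap_apply_of_ne_of_ne hσkj hσk, swap_apply_right]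
      have hcm : c m = m := by
        rw [hcdef]
        simp [swap_apply_of_ne_of_ne hmj hmk, swap_apply_of_ne_of_ne hmi hmσk]
      rw [hcb, hcm] at hc'
      refine ⟨_, ?_, hc'⟩
      rw [swap_comm i m, swap_comm (σ k) m]
      exact isThreeCycle_swap_mul_swap_same hmi hmσk (Ne.symm hσki)
  · have hc := comm_swap_mem P hP hσP i j
    rw [← hj] at hc
    have hjσj : j ≠ σ j := fun h => hij (σ.injective (hj.trans h))
    refine ⟨_, ?_, hc⟩
    rw [swap_comm i j]
    exact isThreeCycle_swap_mul_swap_same hjσj (Ne.symm hij) hji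
end Sn
section Aux5

open SemidirectProduct Equiv Subgroup

variable {n : ℕ}

lemma exists_nonconst_inl (hn : n = 3 ∨ 5 ≤ n) {N : Subgroup (WD n)} (hN : N.Normal)
    {g : WD n} (hg : g ∈ N) (hr : g.right ≠ 1) :
    ∃ v : Ve n, inl v ∈ N ∧ ∃ p q : Fin n, toAdd (v : Vn n) p ≠ toAdd (v : Vn n) q := by
  have comm_pair_mem' : ∀ (σ : Equiv.Perm (Fin n)), g.right = σ → ∀ a b : Fin n,
      inl (pairVe n a b * pairVe n (σ a) (σ b)) ∈ N := by
    rintro σ rfl a b; exact comm_pair_mem hN hg a b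
  generalize hgr : g.right = σ at hr
  obtain ⟨i, hi⟩ : ∃ i, σ i ≠ i := by
    by_contra hc
    push_neg at hc
    exact hr (Equiv.ext hc)
  set j := σ i with hj
  have hij : i ≠ j := fun h => hi h.symm
  by_cases hji : σ j = i
  · -- σ swaps i and j
    obtain ⟨k, hk⟩ := exists_notMem_of_card_lt {i, j} (by
      refine lt_of_le_of_lt (Finset.card_insert_le _ _) ?_
      simp; omega)
    simp only [Finset.mem_insert, Finset.mem_singleton, not_or] at hk
    obtain ⟨hki, hkj⟩ := hk
    have hmem := comm_pair_mem' σ hgr i k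
    rw [← hj] at hmem
    have hσkj : σ k ≠ j := fun h => hki (σ.injective (h.trans hj))
    have hσki : σ k ≠ i := fun h => hkj (σ.injective (h.trans hji.symm))
    by_cases hσk : σ k = k
    · rw [hσk] at hmem
      refine ⟨_, hmem, i, k, ?_⟩
      rw [toAdd_coe_mul, toAdd_coe_mul, toAdd_pairVe, toAdd_pairVe, toAdd_pairVe, toAdd_pairVe,
        pairVec_apply, pairVec_apply, pairVec_apply, pairVec_apply]
      simp only [if_pos rfl, if_neg hij, if_neg (Ne.symm hki), if_neg (Ne.symm hkj),
        if_neg hki, if_neg hkj]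
      decide
    · -- i, j, k, σ k distinct; need n ≥ 5
      have h4 : ({i, j, k, σ k} : Finset (Fin n)).card = 4 := by
        rw [Finset.card_insert_of_notMem (by simp [hij, Ne.symm hki, Ne.symm hσki]),
          Finset.card_insert_of_notMem (by simp [Ne.symm hkj, Ne.symm hσkj]),
          Finset.card_insert_of_notMem (by simp [Ne.symm hσk]), Finset.card_singleton]
      have h5 : 5 ≤ n := by
        rcases hn with rfl | h5
        · exfalso
          have := Finset.card_le_card (Finset.subset_univ ({i, j, k, σ k} : Finset (Fin 3)))
          rw [h4] at this; simp at this
        · exact h5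
      obtain ⟨m, hm⟩ := exists_notMem_of_card_lt {i, j, k, σ k} (by omega)
      simp only [Finset.mem_insert, Finset.mem_singleton, not_or] at hm
      obtain ⟨hmi, hmj, hmk, hmσk⟩ := hm
      refine ⟨_, hmem, i, m, ?_⟩
      rw [toAdd_coe_mul, toAdd_coe_mul, toAdd_pairVe, toAdd_pairVe, toAdd_pairVe, toAdd_pairVe,
        pairVec_apply, pairVec_apply, pairVec_apply, pairVec_apply]
      simp only [if_pos rfl, if_neg hij, if_neg (Ne.symm hki), if_neg (Ne.symm hσki),
        if_neg hmi, if_neg hmj, if_neg hmk, if_neg hmσk]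
      decide
  · have hmem := comm_pair_mem' σ hgr i j
    rw [← hj, pairVe_mul_pairVe] at hmem
    have hjσj : j ≠ σ j := fun h => hij (σ.injective (hj.trans h))
    refine ⟨_, hmem, i, j, ?_⟩
    rw [toAdd_pairVe, toAdd_pairVe, pairVec_apply, pairVec_apply]
    simp only [if_pos rfl, if_neg (Ne.symm hij), if_neg (Ne.symm hji), if_neg hjσj]
    decide

end Aux5
section Aux6

open SemidirectProduct Equiv Subgroup

variable {n : ℕ}

lemma zmod2_ne_one : ∀ x : ZMod 2, x ≠ 1 → x = 0 := by decide

lemma inl_left_of_right_one {g : WD n} (h : g.right = 1) : inl g.left = g := by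
  conv_rhs => rw [← inl_left_mul_inr_right g]
  rw [h, map_one, mul_one]

lemma VeInWD_normal : (VeInWD n).Normal := by
  rw [VeInWD_eq_ker]; exact MonoidHom.normal_ker _

lemma mem_DeltaInWD_iff {x : WD n} : x ∈ DeltaInWD n ↔
    ∃ d : Ve n, (∀ i j, toAdd (d : Vn n) i = toAdd (d : Vn n) j) ∧ inl d = x := by
  simp only [DeltaInWD, Subgroup.mem_map, Subgroup.mem_comap]
  rfl

lemma DeltaInWD_normal : (DeltaInWD n).Normal := by
  constructor
  intro x hx g
  rw [mem_DeltaInWD_iff] at hx ⊢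
  obtain ⟨d, hd, rfl⟩ := hx
  refine ⟨permAutVe n g.right d, fun i j => ?_, (conj_inl_eq g d).symm⟩
  rw [toAdd_permAutVe, toAdd_permAutVe]
  exact hd _ _

lemma pairVe_ne_one {a b : Fin n} (hab : a ≠ b) : pairVe n a b ≠ 1 := by
  intro h
  have := congrArg (fun w : Ve n => toAdd (w : Vn n) a) h
  simp only [toAdd_pairVe, pairVec_apply, if_pos rfl, if_neg hab, toAdd_coe_one, add_zero] at this
  exact one_ne_zero this

lemma swap_ne_one' {a b : Fin n} (hab : a ≠ b) : Equiv.swap a b ≠ 1 := by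
  intro h
  have := congrArg (fun e : Equiv.Perm (Fin n) => e a) h
  simp only [swap_apply_left, Equiv.Perm.one_apply] at this
  exact hab this.symm

end Aux6

open SemidirectProduct Equiv Subgroup in
/-- Let `n = 3` or `n ≥ 5`. A subgroup `N` of the Weyl group `W(Dₙ) = Vₑ ⋊ Sₙ` is a
nontrivial proper normal subgroup if and only if `N = Vₑ` (identified with the pairs
`(v,1)`), or `N = Vₑ ⋊ Aₙ`, or `n` is even and `N = Δ`. -/
theorem normal_subgroups_of_WD (n : ℕ) (hn : n = 3 ∨ 5 ≤ n) (N : Subgroup (WD n)) :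
    (N.Normal ∧ N ≠ ⊥ ∧ N ≠ ⊤) ↔
      (N = VeInWD n ∨ N = VeAltInWD n ∨ (Even n ∧ N = DeltaInWD n)) := by
  have h3 : 3 ≤ n := by rcases hn with rfl | h <;> omega
  set i0 : Fin n := ⟨0, by omega⟩ with hi0
  set i1 : Fin n := ⟨1, by omega⟩ with hi1
  have h01 : i0 ≠ i1 := by simp [hi0, hi1, Fin.ext_iff]
  constructor
  · rintro ⟨hN, hbot, htop⟩
    by_cases hsub : ∀ g ∈ N, g.right = 1
    · -- N is contained in Vₑ
      have hle : N ≤ VeInWD n := fun g hg => mem_VeInWD_iff.2 (hsub g hg)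
      by_cases hconst : ∃ g ∈ N, ∃ p q : Fin n,
          toAdd ((g.left : Ve n) : Vn n) p ≠ toAdd ((g.left : Ve n) : Vn n) q
      · left
        obtain ⟨g, hg, p, q, hpq⟩ := hconst
        have hginl : inl g.left ∈ N := by rw [inl_left_of_right_one (hsub g hg)]; exact hg
        exact le_antisymm hle (VeInWD_le_of_nonconst hN hginl hpq)
      · right; right
        push_neg at hconst
        obtain ⟨g, hg, hg1⟩ : ∃ g ∈ N, g ≠ 1 := by
          by_contra hc
          push_neg at hc
          exact hbot ((Subgroup.eq_bot_iff_forall N).2 hc)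
        have hginl : inl g.left = g := inl_left_of_right_one (hsub g hg)
        have hall : ∀ i, toAdd ((g.left : Ve n) : Vn n) i = 1 := by
          intro i
          by_contra hne1
          have hzero := zmod2_ne_one _ hne1
          apply hg1
          rw [← hginl]
          have : g.left = 1 := Ve_ext fun k => by
            rw [hconst g hg k i, hzero, toAdd_coe_one]
          rw [this, map_one]
        have heven : Even n := by
          have hsum : ∑ i, toAdd ((g.left : Ve n) : Vn n) i = 0 := g.left.2
          rw [Finset.sum_congr rfl (fun i _ => hall i), Finset.sum_const,
            Finset.card_univ, Fintype.card_fin, nsmul_eq_mul, mul_one] at hsum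
          rw [even_iff_two_dvd]
          exact (ZMod.natCast_eq_zero_iff n 2).1 hsum
        refine ⟨heven, le_antisymm ?_ ?_⟩
        · intro x hx
          rw [mem_DeltaInWD_iff]
          exact ⟨x.left, fun i j => hconst x hx i j, inl_left_of_right_one (hsub x hx)⟩
        · intro x hx
          rw [mem_DeltaInWD_iff] at hx
          obtain ⟨d, hd, rfl⟩ := hx
          by_cases hd0 : toAdd (d : Vn n) i0 = 0
          · have : d = 1 := Ve_ext fun i => by rw [hd i i0, hd0, toAdd_coe_one]
            rw [this, map_one]; exact one_mem N
          · have : d = g.left := Ve_ext fun i => by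
              rw [hd i i0, zmod2_ne_zero _ hd0, hall i]
            rw [this, hginl]; exact hg
    · push_neg at hsub
      obtain ⟨g, hg, hgr⟩ := hsub
      obtain ⟨v, hvN, p, q, hpq⟩ := exists_nonconst_inl hn hN hg hgr
      have hVle : VeInWD n ≤ N := VeInWD_le_of_nonconst hN hvN hpq
      set P := N.map (rightHom : WD n →* Equiv.Perm (Fin n)) with hP
      have hPnormal : P.Normal := Subgroup.Normal.map hN _ rightHom_surjective
      have hPbot : P ≠ ⊥ := by
        intro h
        have hm : g.right ∈ P := ⟨g, hg, rfl⟩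
        rw [h, Subgroup.mem_bot] at hm
        exact hgr hm
      have hAlt := normal_perm_ge_alternating hn P hPnormal hPbot
      have hNcomap : N = P.comap (rightHom : WD n →* Equiv.Perm (Fin n)) := by
        rw [hP, Subgroup.comap_map_eq, sup_eq_left.2 (by rw [← VeInWD_eq_ker]; exact hVle)]
      by_cases hodd : ∀ τ ∈ P, τ ∈ alternatingGroup (Fin n)
      · right; left
        have hPeq : P = alternatingGroup (Fin n) := le_antisymm hodd hAlt
        rw [hNcomap, hPeq]
        rfl
      · exfalso
        apply htop
        push_neg at hodd
        obtain ⟨τ, hτP, hτ⟩ := hodd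
        have hPtop : P = ⊤ := by
          rw [eq_top_iff]
          intro x _
          rcases Int.units_eq_one_or (Equiv.Perm.sign x) with hx | hx
          · exact hAlt (Equiv.Perm.mem_alternatingGroup.2 hx)
          · have hτs : Equiv.Perm.sign τ = -1 := by
              rcases Int.units_eq_one_or (Equiv.Perm.sign τ) with h | h
              · exact absurd (Equiv.Perm.mem_alternatingGroup.2 h) hτ
              · exact h
            have hxa : x * τ⁻¹ ∈ alternatingGroup (Fin n) :=
              Equiv.Perm.mem_alternatingGroup.2 (by rw [map_mul, map_inv, hx, hτs]; decide)
            have := mul_mem (hAlt hxa) hτP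
            rwa [inv_mul_cancel_right] at this
        rw [hNcomap, hPtop, Subgroup.comap_top]
  · have hne_bot : ∀ M : Subgroup (WD n), inl (pairVe n i0 i1) ∈ M → M ≠ ⊥ := by
      intro M hM hMbot
      rw [hMbot, Subgroup.mem_bot] at hM
      have : (inl (pairVe n i0 i1) : WD n) = inl (1 : Ve n) := by rw [map_one]; exact hM
      exact pairVe_ne_one h01 (inl_inj.1 this)
    have hswap_notVe : inr (swap i0 i1) ∉ VeInWD n := by
      rw [mem_VeInWD_iff, right_inr]
      exact swap_ne_one' h01
    rintro (rfl | rfl | ⟨heven, rfl⟩)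
    · refine ⟨VeInWD_normal, hne_bot _ ⟨_, rfl⟩, fun h => hswap_notVe (h ▸ Subgroup.mem_top _)⟩
    · refine ⟨Subgroup.Normal.comap inferInstance _, hne_bot _ ?_, fun h => ?_⟩
      · show rightHom (inl (pairVe n i0 i1)) ∈ alternatingGroup (Fin n)
        rw [rightHom_inl]
        exact one_mem _
      · have hm : inr (swap i0 i1) ∈ VeAltInWD n := h ▸ Subgroup.mem_top _
        have : Equiv.Perm.sign (swap i0 i1) = 1 := by
          rw [← Equiv.Perm.mem_alternatingGroup]
          simpa [VeAltInWD] using hm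
        rw [Equiv.Perm.sign_swap h01] at this
        exact absurd this (by decide)
    · have hones_sum : ∑ i : Fin n, (1 : ZMod 2) = 0 := by
        rw [Finset.sum_const, Finset.card_univ, Fintype.card_fin, nsmul_eq_mul, mul_one]
        exact (ZMod.natCast_eq_zero_iff n 2).2 (even_iff_two_dvd.1 heven)
      set ones : Ve n := ⟨ofAdd (fun _ => (1 : ZMod 2)), hones_sum⟩ with hones
      have honesmem : inl ones ∈ DeltaInWD n :=
        mem_DeltaInWD_iff.2 ⟨ones, fun i j => rfl, rfl⟩
      refine ⟨DeltaInWD_normal, fun h => ?_, fun h => ?_⟩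
      · rw [h, Subgroup.mem_bot] at honesmem
        have := congrArg (fun w : WD n => toAdd ((w.left : Ve n) : Vn n) i0) honesmem
        simp only [left_inl, one_left] at this
        exact one_ne_zero (this.trans (toAdd_coe_one i0))
      · have hm : inr (swap i0 i1) ∈ DeltaInWD n := h ▸ Subgroup.mem_top _
        rw [mem_DeltaInWD_iff] at hm
        obtain ⟨d, -, hd⟩ := hm
        have := congrArg SemidirectProduct.right hd
        simp only [right_inl, right_inr] at this
        exact swap_ne_one' h01 this.symm
end

section
/- Let U, U₁, …, U_r be finite groups with surjective homomorphisms pᵢ : U → Uᵢ such that the induced map U → ∏ᵢ Uᵢ is injective. Then there exist a field K with algebraic closure K̄ and intermediate fields L₁, …, L_r of K̄/K, each finite-dimensional and Galois over K, such that Gal(Lᵢ/K) is isomorphic to Uᵢ for each i, and the Galois group over K of the compositum L₁⋯L_r (the supremum of the Lᵢ as intermediate fields) is isomorphic to U. -/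
/-- A realization of the groups `U, U₁, …, U_r` over a field `K`: intermediate fields
`L₁, …, L_r` of an algebraic closure `K̄/K`, each finite and Galois over `K`, with
`Gal(Lᵢ/K) ≅ Uᵢ`, and with the Galois group of the compositum `L₁⋯L_r` isomorphic to
`U`. -/
structure GaloisRealization (r : ℕ) (U : Type) [Group U]
    (Ui : Fin r → Type) [∀ i, Group (Ui i)] : Type 1 where
  K : Type
  Kbar : Type
  [fieldK : Field K]
  [fieldKbar : Field Kbar]
  [alg : Algebra K Kbar]
  [isAlgClosure : IsAlgClosure K Kbar]
  L : Fin r → IntermediateField K Kbar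
  finiteDimensional : ∀ i, FiniteDimensional K (L i)
  isGalois : ∀ i, IsGalois K (L i)
  galIso : ∀ i, Nonempty ((↥(L i) ≃ₐ[K] ↥(L i)) ≃* Ui i)
  galCompositumIso :
    Nonempty ((↥(⨆ i, L i : IntermediateField K Kbar) ≃ₐ[K]
      ↥(⨆ i, L i : IntermediateField K Kbar)) ≃* U)

open MvPolynomial

noncomputable section IGP

variable (U : Type) [Group U] [Finite U]

/-- permutation action on polynomial ring -/
def polyAut (g : U) : MvPolynomial U ℚ ≃+* MvPolynomial U ℚ :=
  (renameEquiv ℚ (Equiv.mulLeft g)).toRingEquiv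

lemma nzd_map_eq {R : Type*} [CommRing R] [IsDomain R] (e : R ≃+* R) :
    (nonZeroDivisors R).map e.toMonoidHom = nonZeroDivisors R := by
  ext x
  simp only [Submonoid.mem_map, mem_nonZeroDivisors_iff_ne_zero]
  constructor
  · rintro ⟨y, hy, rfl⟩
    simpa using (e.injective.ne_iff' (map_zero e)).mpr hy
  · intro hx
    exact ⟨e.symm x, by simpa using (e.symm.injective.ne_iff' (map_zero e.symm)).mpr hx,
      e.apply_symm_apply x⟩

abbrev FF (U : Type) [Group U] : Type := FractionRing (MvPolynomial U ℚ)

def fracAut (g : U) : FF U ≃+* FF U :=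
  IsLocalization.ringEquivOfRingEquiv _ _ (polyAut U g) (nzd_map_eq _)

lemma fracAut_algebraMap (g : U) (x : MvPolynomial U ℚ) :
    fracAut U g (algebraMap _ (FF U) x) = algebraMap _ (FF U) (polyAut U g x) :=
  IsLocalization.ringEquivOfRingEquiv_eq _ _

def fracHom : U →* RingAut (FF U) where
  toFun := fracAut U
  map_one' := by
    apply RingEquiv.toRingHom_injective
    apply IsLocalization.ringHom_ext (nonZeroDivisors (MvPolynomial U ℚ))
    refine RingHom.ext fun x => ?_
    have h1 : ⇑(Equiv.mulLeft (1 : U)) = id := funext fun y => one_mul y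
    simp only [RingEquiv.toRingHom_eq_coe, RingHom.coe_comp, RingHom.coe_coe,
      Function.comp_apply, RingEquiv.coe_toRingHom]
    show fracAut U 1 (algebraMap _ _ x) = algebraMap _ _ x
    rw [fracAut_algebraMap]
    simp [polyAut, h1, rename_id]
  map_mul' g h := by
    apply RingEquiv.toRingHom_injective
    apply IsLocalization.ringHom_ext (nonZeroDivisors (MvPolynomial U ℚ))
    refine RingHom.ext fun x => ?_
    simp only [RingEquiv.toRingHom_eq_coe, RingHom.coe_comp, RingHom.coe_coe,
      Function.comp_apply, RingEquiv.coe_toRingHom]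
    show fracAut U (g * h) (algebraMap _ _ x) = (fracAut U g) ((fracAut U h) (algebraMap _ _ x))
    rw [fracAut_algebraMap, fracAut_algebraMap, fracAut_algebraMap]
    congr 1
    simp only [polyAut, renameEquiv_apply, AlgEquiv.toRingEquiv_eq_coe,
      AlgEquiv.coe_ringEquiv, rename_rename]
    have h1 : ⇑(Equiv.mulLeft g) ∘ ⇑(Equiv.mulLeft h) = ⇑(Equiv.mulLeft (g * h)) :=
      funext fun y => (mul_assoc g h y).symm
    rw [h1]

instance : MulSemiringAction U (FF U) := MulSemiringAction.compHom _ (fracHom U)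

lemma smul_def (g : U) (x : FF U) : g • x = fracAut U g x := rfl

instance : FaithfulSMul U (FF U) where
  eq_of_smul_eq_smul {g h} hf := by
    have := hf (algebraMap (MvPolynomial U ℚ) (FF U) (X 1))
    rw [smul_def, smul_def, fracAut_algebraMap, fracAut_algebraMap] at this
    have h2 := IsFractionRing.injective (MvPolynomial U ℚ) (FF U) this
    simp only [polyAut, renameEquiv_apply, AlgEquiv.toRingEquiv_eq_coe,
      AlgEquiv.coe_ringEquiv, rename_X] at h2
    simpa using X_injective h2

end IGP

noncomputable section Main

open IntermediateField

lemma fixedField_bot' {K E : Type*} [Field K] [Field E] [Algebra K E] :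
    IntermediateField.fixedField (⊥ : Subgroup (E ≃ₐ[K] E)) = ⊤ := by
  rw [eq_top_iff]
  rintro x - ⟨g, hg⟩
  rw [Subgroup.mem_bot] at hg
  subst hg
  rfl

section Aux

variable {K M Kbar : Type} [Field K] [Field M] [Field Kbar]
variable [Algebra K M] [Algebra K Kbar] [IsAlgClosure K Kbar]
variable [FiniteDimensional K M] [IsGalois K M]
variable {r : ℕ} {U : Type} [Group U] {Ui : Fin r → Type} [∀ i, Group (Ui i)]

theorem main_aux (θ : M →ₐ[K] Kbar) (iso : (M ≃ₐ[K] M) ≃* U)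
    (p : ∀ i, U →* Ui i) (hsurj : ∀ i, Function.Surjective (p i))
    (hinj : Function.Injective (fun u i => p i u)) :
    Nonempty (GaloisRealization r U Ui) := by
  classical
  let H : Fin r → Subgroup (M ≃ₐ[K] M) := fun i => (p i).ker.comap iso.toMonoidHom
  haveI hn : ∀ i, (H i).Normal := fun i => Subgroup.Normal.comap inferInstance _
  let Fi : Fin r → IntermediateField K M := fun i => IntermediateField.fixedField (H i)
  haveI hgalFi : ∀ i, IsGalois K (Fi i) := fun i =>
    IsGalois.of_fixedField_normal_subgroup (H i)
  haveI hfdFi : ∀ i, FiniteDimensional K (Fi i) := fun i =>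
    FiniteDimensional.left K (Fi i) M
  let galFi : ∀ i, ((Fi i) ≃ₐ[K] (Fi i)) ≃* Ui i := fun i =>
    ((IsGalois.normalAutEquivQuotient (H i)).symm.trans
      (QuotientGroup.congr (H i) (p i).ker iso
        (Subgroup.map_comap_eq_self_of_surjective iso.surjective _))).trans
      (QuotientGroup.quotientKerEquivOfSurjective (p i) (hsurj i))
  let L : Fin r → IntermediateField K Kbar := fun i => (Fi i).map θ
  let eqvL : ∀ i, (Fi i) ≃ₐ[K] (L i) := fun i => IntermediateField.equivMap (Fi i) θ
  haveI hfdL : ∀ i, FiniteDimensional K (L i) := fun i =>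
    (eqvL i).toLinearEquiv.finiteDimensional
  haveI hgalL : ∀ i, IsGalois K (L i) := fun i => IsGalois.of_algEquiv (eqvL i)
  have h1 : (⨅ i, H i) = ⊥ := by
    rw [eq_bot_iff]
    intro σ hσ
    rw [Subgroup.mem_iInf] at hσ
    rw [Subgroup.mem_bot]
    apply iso.injective
    rw [map_one]
    exact hinj (funext fun i => by simpa using (MonoidHom.mem_ker.mp (Subgroup.mem_comap.mp (hσ i))))
  have h2 : (⨆ i, Fi i) = ⊤ := by
    have hb : IntermediateField.fixingSubgroup (⨆ i, Fi i) = ⊥ := by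
      rw [eq_bot_iff, ← h1]
      refine le_iInf fun i => ?_
      rw [← IntermediateField.fixingSubgroup_fixedField (H i)]
      intro σ hσ
      intro x
      exact hσ ⟨x.1, (le_iSup Fi i : Fi i ≤ ⨆ i, Fi i) x.2⟩
    rw [← IsGalois.fixedField_fixingSubgroup (⨆ i, Fi i), hb, fixedField_bot']
  have hsup : (⨆ i, L i) = θ.fieldRange := by
    show (⨆ i, (Fi i).map θ) = _
    rw [← IntermediateField.map_iSup, h2, ← AlgHom.fieldRange_eq_map]
  have galComp : Nonempty ((↥(⨆ i, L i) ≃ₐ[K] ↥(⨆ i, L i)) ≃* U) :=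
    ⟨((AlgEquiv.autCongr ((AlgEquiv.ofInjectiveField θ).trans
        (IntermediateField.equivOfEq hsup).symm)).symm).trans iso⟩
  exact ⟨⟨K, Kbar, L, hfdL, hgalL, fun i => ⟨(AlgEquiv.autCongr (eqvL i)).symm.trans (galFi i)⟩, galComp⟩⟩

end Aux

end Main


set_option synthInstance.maxHeartbeats 400000 in
set_option maxHeartbeats 1000000 in
/-- Let `U, U₁, …, U_r` be finite groups with surjective homomorphisms `pᵢ : U → Uᵢ` such
that the induced map `U → ∏ᵢ Uᵢ` is injective.  Then there exist a field `K` with algebraic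
closure `K̄` and intermediate fields `L₁, …, L_r` of `K̄/K`, each finite-dimensional and
Galois over `K`, such that `Gal(Lᵢ/K) ≅ Uᵢ` for each `i`, and the Galois group over `K` of
the compositum `L₁⋯L_r` is isomorphic to `U`. -/
theorem compositum_realizable_by_fields (r : ℕ) (U : Type) [Group U] [Finite U]
    (Ui : Fin r → Type) [∀ i, Group (Ui i)] [∀ i, Finite (Ui i)]
    (p : ∀ i, U →* Ui i) (hsurj : ∀ i, Function.Surjective (p i))
    (hinj : Function.Injective (fun u i => p i u)) :
    Nonempty (GaloisRealization r U Ui) := by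
  haveI : IsGalois (FixedPoints.subfield U (FF U)) (FF U) := ⟨⟩
  haveI : Algebra.IsAlgebraic (FixedPoints.subfield U (FF U))
      (AlgebraicClosure (FF U)) := Algebra.IsAlgebraic.trans _ (FF U) _
  haveI : IsAlgClosure (FixedPoints.subfield U (FF U)) (AlgebraicClosure (FF U)) :=
    ⟨inferInstance, inferInstance⟩
  exact main_aux (IsScalarTower.toAlgHom (FixedPoints.subfield U (FF U)) (FF U)
      (AlgebraicClosure (FF U)))
    (FixedPoints.toAlgAutMulEquiv U (FF U)).symm p hsurj hinj
end
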